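/- In a finite T₀ topological space, identified with its specialization poset via x ≤ y iff x ∈ cl{y}, a subset A is locally closed (i.e., cl(A) \ A is closed) if and only if A is convex with respect to the specialization order (that is, x ≤ y ≤ z with x, z ∈ A implies y ∈ A). -/
import Mathlib

/-- In a finite T₀ space with specialization order `x ≤ y ↔ x ∈ cl {y}`, a set `A` is
locally closed (`cl A \ A` closed) iff `A` is convex with respect to this order. -/

private lemma closure_eq_biUnion {X : Type*} [TopologicalSpace X] [Finite X] (S : Set X) :
    closure S = ⋃ s ∈ S, closure {s} := by
  conv_lhs => rw [← Set.biUnion_of_singleton S]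
  rw [Set.biUnion_eq_iUnion, closure_iUnion, Set.iUnion_coe_set]

theorem stmt_3 {X : Type*} [TopologicalSpace X] [Finite X] [T0Space X] (A : Set X) :
    IsClosed (closure A \ A) ↔
      ∀ x y z : X, x ∈ closure {y} → y ∈ closure {z} → x ∈ A → z ∈ A → y ∈ A := by
  constructor
  · intro h x y z hxy hyz hx hz
    by_contra hy
    have hyA : y ∈ closure A \ A :=
      ⟨closure_mono (Set.singleton_subset_iff.2 hz) hyz, hy⟩
    have hxmem : x ∈ closure A \ A := by
      have := closure_mono (Set.singleton_subset_iff.2 hyA) (s := {y})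
      rw [h.closure_eq] at this
      exact this hxy
    exact hxmem.2 hx
  · intro hconv
    rw [← closure_subset_iff_isClosed]
    intro x hx
    obtain ⟨y, hy, hxy⟩ : ∃ y ∈ closure A \ A, x ∈ closure {y} := by
      rw [closure_eq_biUnion] at hx
      simpa using hx
    refine ⟨isClosed_closure.closure_subset (closure_mono (Set.singleton_subset_iff.2 hy.1) hxy), ?_⟩
    intro hxA
    obtain ⟨z, hz, hyz⟩ : ∃ z ∈ A, y ∈ closure {z} := by
      have h1 := hy.1
      rw [closure_eq_biUnion] at h1
      simpa using h1
    exact hy.2 (hconv x y z hxy hyz hxA hz)
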